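/- Let A be a group, H a subgroup of A, and Q = A *_H A the generalized free square (the pushout of two copies of the inclusion H → A). For a normal subgroup N of A, let Q_N = (A/N) *_{HN/N} (A/N) be the generalized free square of A/N over the image HN/N of H, and let ε_N : Q → Q_N be the homomorphism extending the canonical projection A → A/N on each factor. Then for every g ∈ Q with g ≠ 1 such that Q is built from a 𝒦-residual group A with 𝒦-closed subgroup H (𝒦 a root class), there exists a normal subgroup N of A with A/N ∈ 𝒦 and ε_N(g) ≠ 1; i.e., Q is residually a group of the form Q_N with A/N ∈ 𝒦. -/

import Mathlib

open Pointwise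

universe u

/-- A class of groups in universe `u`. -/
abbrev GroupClass : Type (u + 1) := ∀ (G : Type u) [Group G], Prop

/-- A class of groups is invariant under isomorphism. -/
def GroupClass.IsoInvariant (K : GroupClass.{u}) : Prop :=
  ∀ (G H : Type u) [Group G] [Group H], G ≃* H → K G → K H

/-- A class of groups is closed under taking subgroups. -/
def GroupClass.SubgroupClosed (K : GroupClass.{u}) : Prop :=
  ∀ (G : Type u) [Group G], K G → ∀ H : Subgroup G, K H

/-- A class of groups is closed under binary direct products. -/
def GroupClass.ProdClosed (K : GroupClass.{u}) : Prop :=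
  ∀ (A B : Type u) [Group A] [Group B], K A → K B → K (A × B)

/-- `K` is a root class: it is an isomorphism-invariant class of groups containing a
nontrivial group, closed under subgroups and finite direct products, and satisfying the
root condition on subnormal chains `C ⊴ B ⊴ A` of length two. -/
def IsRootClass (K : GroupClass.{u}) : Prop :=
  K.IsoInvariant ∧
  (∃ (G : Type u) (_ : Group G), Nontrivial G ∧ K G) ∧
  K.SubgroupClosed ∧
  K.ProdClosed ∧
  (∀ (A : Type u) [Group A] (B : Subgroup A) [B.Normal] (C : Subgroup B) [C.Normal],
    K (A ⧸ B) → K ((B : Type u) ⧸ C) →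
    ∃ (D : Subgroup A) (hD : D.Normal), D ≤ C.map B.subtype ∧ (letI := hD; K (A ⧸ D)))

/-- A group `G` is `K`-residual: every nonidentity element is excluded from some normal
subgroup with quotient in `K`. -/
def KResidual (K : GroupClass.{u}) (G : Type u) [Group G] : Prop :=
  ∀ g : G, g ≠ 1 → ∃ (N : Subgroup G) (hN : N.Normal),
    (letI := hN; K (G ⧸ N)) ∧ g ∉ N

/-- A subgroup `H` of `A` is `K`-closed: every element of `A` outside `H` avoids the set
`N * H` for some normal subgroup `N` of `A` with `A ⧸ N ∈ K`. -/
def KClosed (K : GroupClass.{u}) {A : Type u} [Group A] (H : Subgroup A) : Prop :=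
  ∀ a : A, a ∉ H → ∃ (N : Subgroup A) (hN : N.Normal),
    (letI := hN; K (A ⧸ N)) ∧ a ∉ (N : Set A) * (H : Set A)

/-- The canonical homomorphism `ε_N : A *_H A →* (A/N) *_{HN/N} (A/N)` extending the
projection `A → A ⧸ N` on each factor of the generalized free square. -/
noncomputable def epsN {A : Type u} [Group A] (H : Subgroup A) (N : Subgroup A) [N.Normal] :
    Monoid.PushoutI (fun _ : Bool => H.subtype) →*
      Monoid.PushoutI (fun _ : Bool => (H.map (QuotientGroup.mk' N)).subtype) :=
  Monoid.PushoutI.lift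
    (fun b =>
      (Monoid.PushoutI.of
        (φ := fun _ : Bool => (H.map (QuotientGroup.mk' N)).subtype) b).comp
        (QuotientGroup.mk' N))
    ((Monoid.PushoutI.base
        (fun _ : Bool => (H.map (QuotientGroup.mk' N)).subtype)).comp
      ((QuotientGroup.mk' N).subgroupMap H))
    (fun b => by
      ext x
      exact Monoid.PushoutI.of_apply_eq_base
        (fun _ : Bool => (H.map (QuotientGroup.mk' N)).subtype) b
        (((QuotientGroup.mk' N)).subgroupMap H x))

/-- Quotient by an intersection of two normal subgroups with `K`-quotients is in `K`. -/
theorem K_inf (K : GroupClass.{u}) (hiso : K.IsoInvariant)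
    (hsub : K.SubgroupClosed) (hprod : K.ProdClosed)
    {A : Type u} [Group A] (N₁ N₂ : Subgroup A) [N₁.Normal] [N₂.Normal]
    (k₁ : K (A ⧸ N₁)) (k₂ : K (A ⧸ N₂)) : K (A ⧸ (N₁ ⊓ N₂)) := by
  set f : A →* (A ⧸ N₁) × (A ⧸ N₂) :=
    (QuotientGroup.mk' N₁).prod (QuotientGroup.mk' N₂) with hf
  have hker : N₁ ⊓ N₂ = f.ker := by
    ext a
    simp [hf, MonoidHom.mem_ker, Prod.ext_iff, QuotientGroup.eq_one_iff]
  have e : (A ⧸ (N₁ ⊓ N₂)) ≃* f.range :=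
    (QuotientGroup.quotientMulEquivOfEq hker).trans
      (QuotientGroup.quotientKerEquivRange f)
  exact hiso _ _ e.symm (hsub _ (hprod _ _ k₁ k₂) f.range)

/-- Combining `K`-closedness over a nonempty finite list of elements outside `H`. -/
theorem exists_N_list (K : GroupClass.{u}) (hiso : K.IsoInvariant)
    (hsub : K.SubgroupClosed) (hprod : K.ProdClosed)
    {A : Type u} [Group A] {H : Subgroup A} (hH : KClosed K H)
    (a : A) (l : List A) (ha : a ∉ H) (hl : ∀ b ∈ l, b ∉ H) :
    ∃ (N : Subgroup A) (hN : N.Normal), (letI := hN; K (A ⧸ N)) ∧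
      ∀ b ∈ a :: l, b ∉ (N : Set A) * (H : Set A) := by
  induction l with
  | nil =>
    obtain ⟨N, hN, hk, hmem⟩ := hH a ha
    exact ⟨N, hN, hk, by simpa using hmem⟩
  | cons b l ih =>
    obtain ⟨N₁, hN₁, k₁, h₁⟩ := ih (fun c hc => hl c (List.mem_cons_of_mem _ hc))
    obtain ⟨N₂, hN₂, k₂, h₂⟩ := hH b (hl b List.mem_cons_self)
    letI := hN₁; letI := hN₂
    refine ⟨N₁ ⊓ N₂, inferInstance, K_inf K hiso hsub hprod N₁ N₂ k₁ k₂, ?_⟩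
    intro c hc hmem
    obtain ⟨n, hn, h, hh, rfl⟩ := hmem
    rcases List.mem_cons.1 hc with rfl | hc
    · exact h₁ _ List.mem_cons_self ⟨n, hn.1, h, hh, rfl⟩
    · rcases List.mem_cons.1 hc with rfl | hc
      · exact h₂ ⟨n, hn.2, h, hh, rfl⟩
      · exact h₁ _ (List.mem_cons_of_mem _ hc) ⟨n, hn.1, h, hh, rfl⟩

/-- Expressing the image of a word under `ofCoprodI` as a list product of `of`s. -/
theorem ofCoprodI_word_prod {ι : Type*} {G : ι → Type*} [∀ i, Monoid (G i)]
    {H : Type*} [Monoid H] {φ : ∀ i, H →* G i} (W : Monoid.CoprodI.Word G) :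
    Monoid.PushoutI.ofCoprodI (φ := φ) W.prod =
      (W.toList.map fun ℓ => Monoid.PushoutI.of (φ := φ) ℓ.1 ℓ.2).prod := by
  have h : W.prod = (W.toList.map fun l => Monoid.CoprodI.of l.2).prod := rfl
  rw [h, map_list_prod, List.map_map]
  exact congrArg List.prod (List.map_congr_left fun ℓ _ =>
    Monoid.PushoutI.ofCoprodI_of ℓ.1 ℓ.2)

/-- if `A` is `K`-residual and `H ≤ A` is `K`-closed (`K` a root class),
then for every nonidentity element `g` of the generalized free square `Q = A *_H A`
there is a normal subgroup `N` of `A` with `A ⧸ N ∈ K` and `ε_N g ≠ 1`; that is, `Q` is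
residually a group of the form `Q_N = (A/N) *_{HN/N} (A/N)` with `A ⧸ N ∈ K`. -/
theorem free_square_residually_QN (K : GroupClass.{u}) (hK : IsRootClass K)
    (A : Type u) [Group A] (H : Subgroup A)
    (hA : KResidual K A) (hH : KClosed K H) :
    ∀ g : Monoid.PushoutI (fun _ : Bool => H.subtype), g ≠ 1 →
      ∃ (N : Subgroup A) (hN : N.Normal),
        (letI := hN; K (A ⧸ N)) ∧ (letI := hN; epsN H N g ≠ 1) := by
  classical
  obtain ⟨hiso, -, hsub, hprod, -⟩ := hK
  intro g hg
  have hφ : ∀ i : Bool, Function.Injective ((fun _ : Bool => H.subtype) i) :=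
    fun _ => H.subtype_injective
  obtain ⟨d⟩ := Monoid.PushoutI.NormalWord.transversal_nonempty
    (fun _ : Bool => H.subtype) hφ
  have hgw : (Monoid.PushoutI.NormalWord.equiv (d := d) g).prod = g :=
    Monoid.PushoutI.NormalWord.equiv.symm_apply_apply g
  generalize hwdef : Monoid.PushoutI.NormalWord.equiv (d := d) g = w at hgw
  have hprodrep : w.prod =
      Monoid.PushoutI.base (fun _ : Bool => H.subtype) w.head *
        Monoid.PushoutI.ofCoprodI w.toWord.prod := rfl
  have hletter : ∀ ℓ ∈ w.toList, (Sigma.snd ℓ : A) ∉ H := by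
    intro ℓ hℓ hmem
    have hset : ℓ.2 ∈ d.set ℓ.1 := w.normalized ℓ.1 ℓ.2 (by cases ℓ; exact hℓ)
    have hne : ℓ.2 ≠ 1 := w.ne_one ℓ hℓ
    have hrange : ℓ.2 ∈ ((fun _ : Bool => H.subtype) ℓ.1).range := by
      show ℓ.2 ∈ H.subtype.range
      rw [Subgroup.range_subtype]
      exact hmem
    have hpair := (d.compl ℓ.1).1
      (a₁ := (⟨⟨ℓ.2, hrange⟩, ⟨1, d.one_mem ℓ.1⟩⟩ :
        (((fun _ : Bool => H.subtype) ℓ.1).range : Set A) × d.set ℓ.1))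
      (a₂ := ⟨⟨1, one_mem _⟩, ⟨ℓ.2, hset⟩⟩) (by simp)
    have h1 : (1 : A) = ℓ.2 := congrArg (fun p => (p.2 : A)) hpair
    exact hne h1.symm
  rcases hL : w.toList with _ | ⟨ℓ₀, L⟩
  · -- empty word: g = base w.head
    have hwordprod : w.toWord.prod =
        (w.toList.map fun l => Monoid.CoprodI.of l.2).prod := rfl
    have hprod1 : w.toWord.prod = 1 := by
      rw [hwordprod, hL]; simp
    have hgbase : g = Monoid.PushoutI.base (fun _ : Bool => H.subtype) w.head := by
      rw [← hgw, hprodrep, hprod1]; simp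
    have hh1 : (w.head : A) ≠ 1 := by
      intro h1
      apply hg
      rw [hgbase]
      have hh : w.head = 1 := Subtype.ext h1
      rw [hh, map_one]
    obtain ⟨N, hN, kN, hmemN⟩ := hA (w.head : A) hh1
    refine ⟨N, hN, kN, ?_⟩
    letI := hN
    intro heq
    have hv : epsN H N g =
        Monoid.PushoutI.base (fun _ : Bool => (H.map (QuotientGroup.mk' N)).subtype)
          ((QuotientGroup.mk' N).subgroupMap H w.head) := by
      rw [hgbase]
      simp [epsN, Monoid.PushoutI.lift_base]
    rw [hv] at heq
    have hinj : Function.Injective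
        (Monoid.PushoutI.base (fun _ : Bool => (H.map (QuotientGroup.mk' N)).subtype)) :=
      Monoid.PushoutI.base_injective (fun _ => Subgroup.subtype_injective _)
    have h1 : ((QuotientGroup.mk' N).subgroupMap H w.head) = 1 := by
      apply hinj
      rw [heq, map_one]
    have h2 : QuotientGroup.mk' N (w.head : A) = 1 := congrArg Subtype.val h1
    exact hmemN ((QuotientGroup.eq_one_iff _).1 h2)
  · -- nonempty word
    have hallH : ∀ b ∈ (w.toList.map fun ℓ => (ℓ.2 : A)), b ∉ H := by
      intro b hb
      obtain ⟨ℓ, hℓ, rfl⟩ := List.mem_map.1 hb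
      exact hletter ℓ hℓ
    obtain ⟨N, hN, kN, hNH⟩ := exists_N_list K hiso hsub hprod hH
      ℓ₀.2 (L.map fun ℓ => (ℓ.2 : A))
      (by apply hallH; rw [hL]; simp)
      (by intro b hb; apply hallH; rw [hL]; simpa using Or.inr hb)
    refine ⟨N, hN, kN, ?_⟩
    letI := hN
    intro heq
    have hφ' : ∀ i : Bool, Function.Injective
        ((fun _ : Bool => (H.map (QuotientGroup.mk' N)).subtype) i) :=
      fun _ => Subgroup.subtype_injective _
    have hNHall : ∀ ℓ ∈ w.toList, (ℓ.2 : A) ∉ (N : Set A) * (H : Set A) := by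
      intro ℓ hℓ
      rw [hL] at hℓ
      rcases List.mem_cons.1 hℓ with rfl | hℓ
      · exact hNH _ List.mem_cons_self
      · exact hNH _ (List.mem_cons_of_mem _ (List.mem_map_of_mem hℓ))
    have hne1 : ∀ ℓ ∈ w.toList,
        QuotientGroup.mk' N (ℓ.2 : A) ∉ H.map (QuotientGroup.mk' N) := by
      intro ℓ hℓ hmem
      obtain ⟨h, hh, hhe⟩ := hmem
      have hinN : h⁻¹ * ℓ.2 ∈ N := (QuotientGroup.eq (s := N)).1 hhe
      refine hNHall ℓ hℓ ⟨h * (h⁻¹ * ℓ.2) * h⁻¹, hN.conj_mem _ hinN h, h, hh, by group⟩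
    let Wbar : Monoid.CoprodI.Word (fun _ : Bool => A ⧸ N) :=
      { toList := w.toList.map fun ℓ => ⟨ℓ.1, QuotientGroup.mk' N ℓ.2⟩
        ne_one := by
          intro l hl
          obtain ⟨ℓ, hℓ, rfl⟩ := List.mem_map.1 hl
          intro h1
          have h1' : QuotientGroup.mk' N (ℓ.2 : A) = 1 := h1
          apply hne1 ℓ hℓ
          rw [h1']
          exact one_mem _
        chain_ne := by
          rw [List.isChain_map]
          exact List.IsChain.imp (fun a b h => h) w.chain_ne }
    have hWbar_red : Monoid.PushoutI.Reduced
        (fun _ : Bool => (H.map (QuotientGroup.mk' N)).subtype) Wbar := by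
      intro l hl
      obtain ⟨ℓ, hℓ, rfl⟩ := List.mem_map.1 hl
      show ¬ _ ∈ (H.map (QuotientGroup.mk' N)).subtype.range
      rw [Subgroup.range_subtype]
      exact hne1 ℓ hℓ
    have heps_of : ∀ (b : Bool) (a : A),
        epsN H N (Monoid.PushoutI.of (φ := fun _ : Bool => H.subtype) b a) =
          Monoid.PushoutI.of (φ := fun _ : Bool => (H.map (QuotientGroup.mk' N)).subtype)
            b (QuotientGroup.mk' N a) := by
      intro b a
      simp [epsN, Monoid.PushoutI.lift_of]
    have hofW : Monoid.PushoutI.ofCoprodI Wbar.prod =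
        (w.toList.map fun ℓ =>
          Monoid.PushoutI.of (φ := fun _ : Bool => (H.map (QuotientGroup.mk' N)).subtype)
            ℓ.1 (QuotientGroup.mk' N ℓ.2)).prod := by
      rw [ofCoprodI_word_prod]
      show ((w.toList.map fun ℓ =>
        (⟨ℓ.1, QuotientGroup.mk' N ℓ.2⟩ : Σ _ : Bool, A ⧸ N)).map fun ℓ =>
          Monoid.PushoutI.of (φ := fun _ : Bool => (H.map (QuotientGroup.mk' N)).subtype)
            ℓ.1 ℓ.2).prod = _
      rw [List.map_map]
      rfl
    have key : epsN H N g =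
        Monoid.PushoutI.base (fun _ : Bool => (H.map (QuotientGroup.mk' N)).subtype)
          ((QuotientGroup.mk' N).subgroupMap H w.head) *
          Monoid.PushoutI.ofCoprodI Wbar.prod := by
      have h1 : epsN H N
          (Monoid.PushoutI.base (fun _ : Bool => H.subtype) w.head) =
          Monoid.PushoutI.base (fun _ : Bool => (H.map (QuotientGroup.mk' N)).subtype)
            ((QuotientGroup.mk' N).subgroupMap H w.head) := by
        simp [epsN, Monoid.PushoutI.lift_base]
      have h2 : epsN H N (Monoid.PushoutI.ofCoprodI w.toWord.prod) =
          Monoid.PushoutI.ofCoprodI Wbar.prod := by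
        rw [ofCoprodI_word_prod, map_list_prod, List.map_map, hofW]
        exact congrArg List.prod (List.map_congr_left fun ℓ _ => heps_of ℓ.1 ℓ.2)
      rw [← hgw, hprodrep, map_mul, h1, h2]
    have hmem_range : Monoid.PushoutI.ofCoprodI Wbar.prod ∈
        (Monoid.PushoutI.base (fun _ : Bool => (H.map (QuotientGroup.mk' N)).subtype)).range := by
      rw [key] at heq
      rw [eq_inv_of_mul_eq_one_right heq]
      exact inv_mem ⟨_, rfl⟩
    have hempty := hWbar_red.eq_empty_of_mem_range hφ' hmem_range
    have hnil : Wbar.toList = [] := congrArg Monoid.CoprodI.Word.toList hempty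
    rw [show Wbar.toList = w.toList.map
      (fun ℓ => (⟨ℓ.1, QuotientGroup.mk' N ℓ.2⟩ : Σ _ : Bool, A ⧸ N)) from rfl, hL] at hnil
    simp at hnil
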